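/- (Key estimate in the proof of Lemma 3.7, combinatorial form.) Fix integers n, p ≥ 1 and q ∈ (−1,1). Then Σ_{(i_1,…,i_{2p}) ∈ {0,…,n−1}^{2p}} ( Σ_{π ∈ P_2({1,…,2p})} q^{Cr(π)} · δ(π,(i_1,…,i_{2p})) )^2 ≤ n^p · (4/(1−|q|))^{2p}. -/

import Mathlib

open scoped BigOperators

/-- A pairing of `{1,…,n}` (with `n` even), encoded as a fixed-point-free involution of
`Fin n`: the blocks of the pairing are the orbits `{x, f x}`. -/
def IsPairing {n : ℕ} (f : Fin n → Fin n) : Prop :=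
  (∀ x, f (f x) = x) ∧ ∀ x, f x ≠ x

open scoped Classical in
/-- The set `P₂({1,…,n})` of pairings, as a finset of fixed-point-free involutions. -/
noncomputable def pairings (n : ℕ) : Finset (Fin n → Fin n) :=
  Finset.univ.filter fun f => IsPairing f

/-- The number `Cr(π)` of crossings of a pairing: the number of pairs of blocks
`{x₁,y₁}, {x₂,y₂}` with `x₁ < x₂ < y₁ < y₂`; each such crossing is counted exactly once,
as the pair `(x₁, x₂)` with `y₁ = f x₁`, `y₂ = f x₂`. -/
def crossings {n : ℕ} (f : Fin n → Fin n) : ℕ :=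
  (Finset.univ.filter fun q : Fin n × Fin n =>
    q.1 < q.2 ∧ q.2 < f q.1 ∧ f q.1 < f q.2).card

open scoped Classical in
/-- `δ(π, (i₁,…,iₙ))`: equal to `1` if `i_x = i_y` for every block `{x,y}` of the
pairing, and to `0` otherwise. -/
noncomputable def pairingDelta {n : ℕ} {k : Type*} (f : Fin n → Fin n) (i : Fin n → k) : ℕ :=
  if ∀ x, i (f x) = i x then 1 else 0


namespace Key

open Finset

variable {N : ℕ}

def cnt (f : Fin N → Fin N) (y : Fin N) : ℕ :=
  (Finset.univ.filter fun x => f y < x ∧ x < y ∧ y < f x).card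

lemma f_inj {f : Fin N → Fin N} (hf : IsPairing f) : Function.Injective f :=
  Function.LeftInverse.injective hf.1

lemma cnt_lt (f : Fin N → Fin N) (y : Fin N) : cnt f y < N := by
  have h : (Finset.univ.filter fun x => f y < x ∧ x < y ∧ y < f x) ⊆ Finset.univ.erase y := by
    intro x hx
    simp only [mem_filter] at hx
    exact mem_erase.2 ⟨ne_of_lt hx.2.2.1, mem_univ x⟩
  calc cnt f y ≤ (Finset.univ.erase y).card := Finset.card_le_card h
    _ < N := by
        rw [Finset.card_erase_of_mem (mem_univ y), Finset.card_univ, Fintype.card_fin]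
        exact Nat.sub_lt y.pos Nat.one_pos

lemma cnt_eq_zero_of_opener (f : Fin N → Fin N) {y : Fin N} (h : y < f y) : cnt f y = 0 := by
  rw [cnt, Finset.card_eq_zero]
  rw [Finset.filter_eq_empty_iff]
  intro x _
  rintro ⟨h1, h2, _⟩
  exact absurd (h1.trans h2) (not_lt.2 h.le)

lemma crossings_eq_sum {f : Fin N → Fin N} (hf : IsPairing f) :
    crossings f = ∑ y : Fin N, cnt f y := by
  rw [crossings,
    Finset.card_eq_sum_card_fiberwise (f := fun q : Fin N × Fin N => f q.1) (t := Finset.univ)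
      (fun _ _ => mem_univ _)]
  refine Finset.sum_congr rfl fun y _ => ?_
  rw [cnt]
  apply Finset.card_nbij' (fun q => q.2) (fun x => (f y, x))
  · intro q hq
    obtain ⟨x1, x2⟩ := q
    simp only [mem_coe, mem_filter, mem_univ, true_and] at hq ⊢
    obtain ⟨⟨h1, h2, h3⟩, h4⟩ := hq
    have hx1 : x1 = f y := by rw [← h4, hf.1]
    subst hx1
    rw [h4] at h2 h3
    exact ⟨h1, h2, h3⟩
  · intro x hx
    simp only [mem_coe, mem_filter, mem_univ, true_and] at hx ⊢
    exact ⟨⟨hx.1, by rw [hf.1]; exact hx.2.1, by rw [hf.1]; exact hx.2.2⟩, hf.1 y⟩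
  · intro q hq
    obtain ⟨x1, x2⟩ := q
    simp only [mem_coe, mem_filter, mem_univ, true_and] at hq
    have hx1 : x1 = f y := by rw [← hq.2, hf.1]
    simp [hx1]
  · intro x hx
    rfl

/-- openers -/
def openers (f : Fin N → Fin N) : Finset (Fin N) := Finset.univ.filter fun y => y < f y

lemma card_openers {p : ℕ} {f : Fin (2*p) → Fin (2*p)} (hf : IsPairing f) :
    (openers f).card = p := by
  classical
  have hcard : (openers f).card + (Finset.univ.filter fun y => ¬ y < f y).card = 2 * p := by
    rw [openers, Finset.card_filter_add_card_filter_not, Finset.card_univ,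
      Fintype.card_fin]
  have hbij : (Finset.univ.filter fun y : Fin (2*p) => ¬ y < f y).card = (openers f).card := by
    apply Finset.card_bij (fun y _ => f y)
    · intro y hy
      simp only [mem_filter, mem_univ, true_and, not_lt] at hy
      have : f y < y := lt_of_le_of_ne hy (hf.2 y)
      simp only [openers, mem_filter, mem_univ, true_and, hf.1]
      exact this
    · intro a ha b hb hab
      exact f_inj hf hab
    · intro z hz
      simp only [openers, mem_filter, mem_univ, true_and] at hz
      refine ⟨f z, ?_, hf.1 z⟩
      simp only [mem_filter, mem_univ, true_and, not_lt, hf.1]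
      exact hz.le
  omega


lemma closer_of_not_opener {f : Fin N → Fin N} (hf : IsPairing f) {y : Fin N}
    (h : ¬ y < f y) : f y < y := lt_of_le_of_ne (not_lt.1 h) (hf.2 y)

/-- helper: the set of open blocks at `y` is the same for `f` and `g`, assuming
agreement at closers below `y`. -/
lemma open_mono {f g : Fin N → Fin N} (hf : IsPairing f) (hg : IsPairing g)
    (hb : ∀ y, y < f y ↔ y < g y) {y : Fin N}
    (IH : ∀ z, z < y → f z < z → f z = g z)
    {x : Fin N} (hx : x < y) (hfx : y ≤ f x) : y ≤ g x := by
  by_contra h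
  push_neg at h
  have hgx : x < g x := (hb x).1 (lt_of_lt_of_le hx hfx)
  set z := g x with hz
  have hzx : g z = x := hg.1 x
  have hcz : f z < z := by
    apply closer_of_not_opener hf
    rw [hb z]
    rw [hzx] at *
    exact not_lt.2 hgx.le
  have hfz : f z = x := by rw [IH z h hcz, hzx]
  have : f x = z := by rw [← hfz, hf.1]
  rw [this] at hfx
  exact absurd h (not_lt.2 hfx)

lemma phi_inj {f g : Fin N → Fin N} (hf : IsPairing f) (hg : IsPairing g)
    (hb : ∀ y, y < f y ↔ y < g y) (hc : ∀ y, cnt f y = cnt g y) : f = g := by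
  classical
  -- agreement at closers, by strong induction
  have key : ∀ m : ℕ, ∀ y : Fin N, (y : ℕ) = m → f y < y → f y = g y := by
    intro m
    induction m using Nat.strong_induction_on with
    | _ m IHm =>
      intro y hym hfy
      have IH : ∀ z, z < y → f z < z → f z = g z := fun z hz hcz =>
        IHm (z : ℕ) (hym ▸ hz) z rfl hcz
      have IH' : ∀ z, z < y → g z < z → g z = f z := by
        intro z hz hcz
        have : f z < z := closer_of_not_opener hf (by rw [hb]; exact not_lt.2 hcz.le)
        exact (IH z hz this).symm
      have hgy : g y < y := closer_of_not_opener hg (by rw [← hb]; exact not_lt.2 hfy.le)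
      set O : Finset (Fin N) := Finset.univ.filter fun x => x < y ∧ y ≤ f x with hO
      have hOg : O = Finset.univ.filter fun x => x < y ∧ y ≤ g x := by
        ext x
        simp only [hO, mem_filter, mem_univ, true_and]
        constructor
        · rintro ⟨h1, h2⟩; exact ⟨h1, open_mono hf hg hb IH h1 h2⟩
        · rintro ⟨h1, h2⟩
          exact ⟨h1, open_mono hg hf (fun y => (hb y).symm) IH' h1 h2⟩
      have hfyO : f y ∈ O := by
        simp only [hO, mem_filter, mem_univ, true_and]
        exact ⟨hfy, le_of_eq (hf.1 y).symm⟩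
      have hgyO : g y ∈ O := by
        rw [hOg]
        simp only [mem_filter, mem_univ, true_and]
        exact ⟨hgy, le_of_eq (hg.1 y).symm⟩
      -- cnt as rank in O
      have hcntf : cnt f y = (O.filter fun x => f y < x).card := by
        unfold cnt
        congr 1
        ext x
        simp only [hO, mem_filter, mem_univ, true_and]
        constructor
        · rintro ⟨h1, h2, h3⟩; exact ⟨⟨h2, h3.le⟩, h1⟩
        · rintro ⟨⟨h2, h3⟩, h1⟩
          refine ⟨h1, h2, lt_of_le_of_ne h3 ?_⟩
          intro hxy
          have : x = f y := by rw [hxy, hf.1]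
          rw [this] at h1
          exact lt_irrefl _ h1
      have hcntg : cnt g y = (O.filter fun x => g y < x).card := by
        unfold cnt
        rw [hOg]
        congr 1
        ext x
        simp only [mem_filter, mem_univ, true_and]
        constructor
        · rintro ⟨h1, h2, h3⟩; exact ⟨⟨h2, h3.le⟩, h1⟩
        · rintro ⟨⟨h2, h3⟩, h1⟩
          refine ⟨h1, h2, lt_of_le_of_ne h3 ?_⟩
          intro hxy
          have : x = g y := by rw [hxy, hg.1]
          rw [this] at h1
          exact lt_irrefl _ h1
      -- the rank map is injective on O
      have rank_strict : ∀ a b : Fin N, b ∈ O → a < b →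
          (O.filter fun x => b < x).card < (O.filter fun x => a < x).card := by
        intro a b hbO hab
        apply Finset.card_lt_card
        constructor
        · intro x hx
          simp only [mem_filter] at hx ⊢
          exact ⟨hx.1, hab.trans hx.2⟩
        · intro hsub
          have := hsub (Finset.mem_filter.2 ⟨hbO, hab⟩)
          simp only [mem_filter] at this
          exact lt_irrefl _ this.2
      have hcard : (O.filter fun x => f y < x).card = (O.filter fun x => g y < x).card := by
        rw [← hcntf, ← hcntg, hc]
      rcases lt_trichotomy (f y) (g y) with h | h | h
      · exact absurd hcard (ne_of_gt (rank_strict _ _ hgyO h))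
      · exact h
      · exact absurd hcard (ne_of_lt (rank_strict _ _ hfyO h))
  have key' : ∀ y : Fin N, f y < y → f y = g y := fun y => key y y rfl
  funext y
  rcases lt_trichotomy (f y) y with h | h | h
  · exact key' y h
  · exact absurd h (hf.2 y)
  · -- y is an opener
    have hz : f (f y) < f y := by rw [hf.1]; exact h
    have h2 := key' (f y) hz
    rw [hf.1] at h2
    have h3 : g y = f y := by
      conv_lhs => rw [h2]
      rw [hg.1]
    rw [h3]

lemma geom_aux {t : ℝ} (ht0 : 0 ≤ t) (ht1 : t < 1) (n : ℕ) :
    ∑ i ∈ Finset.range n, t ^ i ≤ 1 / (1 - t) := by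
  rw [geom_sum_eq (ne_of_lt ht1)]
  have e : (t ^ n - 1) / (t - 1) = (1 - t ^ n) / (1 - t) := by
    rw [← neg_div_neg_eq]; ring_nf
  rw [e, div_le_div_iff₀ (by linarith) (by linarith)]
  nlinarith [pow_nonneg ht0 n]

theorem sum_pow_crossings_le (p : ℕ) (hp : 1 ≤ p) {t : ℝ} (ht0 : 0 ≤ t) (ht1 : t < 1) :
    ∑ f ∈ pairings (2*p), t ^ crossings f ≤ (2:ℝ) ^ (2*p) * (1/(1-t)) ^ p := by
  classical
  haveI : NeZero (2*p) := ⟨by omega⟩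
  set N := 2*p with hN
  -- the injection
  set Φ : (Fin N → Fin N) → (Fin N → Bool) × (Fin N → Fin N) :=
    fun f => (fun y => decide (y < f y), fun y => ⟨cnt f y, cnt_lt f y⟩) with hΦ
  set g : (Fin N → Bool) × (Fin N → Fin N) → ℝ :=
    fun bc => ∏ y : Fin N,
      (if bc.1 y then (if bc.2 y = 0 then (1:ℝ) else 0) else t ^ (bc.2 y : ℕ)) with hg
  have hgval : ∀ f ∈ pairings N, t ^ crossings f = g (Φ f) := by
    intro f hfmem
    have hf : IsPairing f := by
      simpa [pairings] using hfmem
    have : ∀ y : Fin N,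
        (if (Φ f).1 y then (if (Φ f).2 y = 0 then (1:ℝ) else 0) else t ^ ((Φ f).2 y : ℕ))
          = t ^ cnt f y := by
      intro y
      simp only [hΦ, decide_eq_true_eq]
      by_cases h : y < f y
      · have h0 : cnt f y = 0 := cnt_eq_zero_of_opener f h
        simp [h, h0, Fin.ext_iff]
      · simp [h]
    have hgPhi : g (Φ f) = ∏ y : Fin N, t ^ cnt f y :=
      Finset.prod_congr rfl fun y _ => this y
    rw [hgPhi, Finset.prod_pow_eq_pow_sum, crossings_eq_sum hf]
  have hgnonneg : ∀ bc, 0 ≤ g bc := by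
    intro bc
    apply Finset.prod_nonneg
    intro y _
    by_cases h : bc.1 y
    · by_cases h2 : bc.2 y = 0 <;> simp [h, h2]
    · simp [h, pow_nonneg ht0]
  -- injectivity of Φ on pairings
  have hinj : Set.InjOn Φ (pairings N) := by
    intro f hfm g' hgm hfg
    have hf : IsPairing f := by simpa [pairings] using hfm
    have hg' : IsPairing g' := by simpa [pairings] using hgm
    have h1 := congrArg Prod.fst hfg
    have h2 := congrArg Prod.snd hfg
    simp only [hΦ] at h1 h2
    apply phi_inj hf hg'
    · intro y
      have := congrFun h1 y
      simpa using this
    · intro y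
      have := congrFun h2 y
      simpa [Fin.ext_iff] using this
  -- target finset
  set T : Finset ((Fin N → Bool) × (Fin N → Fin N)) :=
    (Finset.univ.filter fun b : Fin N → Bool =>
      (Finset.univ.filter fun y => b y = true).card = p) ×ˢ Finset.univ with hT
  have himage : (pairings N).image Φ ⊆ T := by
    intro bc hbc
    rw [Finset.mem_image] at hbc
    obtain ⟨f, hfm, rfl⟩ := hbc
    have hf : IsPairing f := by simpa [pairings] using hfm
    rw [hT, Finset.mem_product]
    refine ⟨Finset.mem_filter.2 ⟨Finset.mem_univ _, ?_⟩, Finset.mem_univ _⟩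
    have : (Finset.univ.filter fun y : Fin N => (decide (y < f y)) = true)
        = Finset.univ.filter fun y => y < f y := by
      apply Finset.filter_congr
      intro y _
      simp
    rw [hΦ]
    simp only []
    rw [this]
    exact card_openers hf
  calc ∑ f ∈ pairings N, t ^ crossings f
      = ∑ f ∈ pairings N, g (Φ f) := Finset.sum_congr rfl hgval
    _ = ∑ bc ∈ (pairings N).image Φ, g bc := (Finset.sum_image (fun a ha b hb => hinj ha hb)).symm
    _ ≤ ∑ bc ∈ T, g bc :=
        Finset.sum_le_sum_of_subset_of_nonneg himage (fun bc _ _ => hgnonneg bc)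
    _ ≤ (2:ℝ) ^ (2*p) * (1/(1-t)) ^ p := by
        rw [hT, Finset.sum_product]
        have hinner : ∀ b : Fin N → Bool,
            (Finset.univ.filter fun y : Fin N => b y = true).card = p →
            ∑ c : Fin N → Fin N, g (b, c) ≤ (1/(1-t)) ^ p := by
          intro b hb
          have hexp : ∑ c : Fin N → Fin N, g (b, c)
              = ∏ y : Fin N, ∑ v : Fin N,
                  (if b y then (if v = 0 then (1:ℝ) else 0) else t ^ (v : ℕ)) := by
            rw [hg]
            rw [Fintype.prod_sum]
          rw [hexp]
          have hfac : ∀ y : Fin N,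
              (∑ v : Fin N, (if b y then (if v = 0 then (1:ℝ) else 0) else t ^ (v : ℕ)))
                = if b y then 1 else ∑ v : Fin N, t ^ (v : ℕ) := by
            intro y
            by_cases h : b y
            · simp [h]
            · simp [h]
          rw [Finset.prod_congr rfl fun y _ => hfac y]
          rw [Finset.prod_ite]
          simp only [Finset.prod_const_one, Finset.prod_const, one_mul]
          have hcard : (Finset.univ.filter fun y : Fin N => ¬ b y = true).card = p := by
            have := Finset.card_filter_add_card_filter_not
              (s := (Finset.univ : Finset (Fin N))) (p := fun y => b y = true)
            rw [Finset.card_univ, Fintype.card_fin] at this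
            omega
          rw [hcard]
          have hS0 : (0:ℝ) ≤ ∑ v : Fin N, t ^ (v : ℕ) :=
            Finset.sum_nonneg fun v _ => pow_nonneg ht0 _
          have hS : ∑ v : Fin N, t ^ (v : ℕ) ≤ 1 / (1 - t) := by
            rw [Fin.sum_univ_eq_sum_range]
            exact geom_aux ht0 ht1 N
          exact pow_le_pow_left₀ hS0 hS p
        calc ∑ b ∈ (Finset.univ.filter fun b : Fin N → Bool =>
                (Finset.univ.filter fun y => b y = true).card = p),
              ∑ c : Fin N → Fin N, g (b, c)
            ≤ ∑ _b ∈ (Finset.univ.filter fun b : Fin N → Bool =>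
                (Finset.univ.filter fun y => b y = true).card = p), (1/(1-t)) ^ p := by
              apply Finset.sum_le_sum
              intro b hb
              exact hinner b (by simpa using hb)
          _ ≤ (2:ℝ) ^ (2*p) * (1/(1-t)) ^ p := by
              rw [Finset.sum_const, nsmul_eq_mul]
              apply mul_le_mul_of_nonneg_right _
                (pow_nonneg (le_of_lt (div_pos one_pos (by linarith))) p)
              have h1 : ((Finset.univ.filter fun b : Fin N → Bool =>
                  (Finset.univ.filter fun y => b y = true).card = p).card : ℝ)
                  ≤ (Finset.univ : Finset (Fin N → Bool)).card := by
                exact_mod_cast Nat.cast_le.2 (Finset.card_le_card (Finset.filter_subset _ _))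
              calc _ ≤ ((Finset.univ : Finset (Fin N → Bool)).card : ℝ) := h1
                _ = (2:ℝ) ^ (2*p) := by
                    rw [Finset.card_univ]
                    rw [Fintype.card_fun]
                    simp [hN]


lemma delta_card_le {n p : ℕ} {k : Type*} [Fintype k] (hk : Fintype.card k = n)
    {f : Fin (2*p) → Fin (2*p)} (hf : IsPairing f) :
    ∑ i : Fin (2*p) → k, (pairingDelta f i : ℝ) ≤ (n:ℝ) ^ p := by
  classical
  have hsum : ∑ i : Fin (2*p) → k, (pairingDelta f i : ℝ)
      = ((Finset.univ.filter fun i : Fin (2*p) → k => ∀ x, i (f x) = i x).card : ℝ) := by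
    rw [Finset.card_filter]
    push_cast
    apply Finset.sum_congr rfl
    intro i _
    simp [pairingDelta]
  rw [hsum]
  set O : Finset (Fin (2*p)) := Finset.univ.filter fun y => y < f y with hO
  have hcard : (Finset.univ.filter fun i : Fin (2*p) → k => ∀ x, i (f x) = i x).card
      ≤ n ^ p := by
    have hle := Finset.card_le_card_of_injOn
      (f := fun i : Fin (2*p) → k => (fun x : {y // y ∈ O} => i x.1))
      (s := Finset.univ.filter fun i : Fin (2*p) → k => ∀ x, i (f x) = i x)
      (t := (Finset.univ : Finset ({y // y ∈ O} → k)))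
      (fun i _ => Finset.mem_univ _) ?_
    · calc (Finset.univ.filter fun i : Fin (2*p) → k => ∀ x, i (f x) = i x).card
          ≤ (Finset.univ : Finset ({y // y ∈ O} → k)).card := hle
        _ = n ^ p := by
            rw [Finset.card_univ, Fintype.card_fun, hk, Fintype.card_coe]
            congr 1
            exact card_openers hf
    · intro i hi j hj hij
      simp only [Finset.coe_filter, Set.mem_setOf_eq, Finset.mem_univ, true_and] at hi hj
      funext y
      rcases lt_trichotomy y (f y) with h | h | h
      · have hyO : y ∈ O := by simp [hO, h]
        exact congrFun hij ⟨y, hyO⟩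
      · exact absurd h.symm (hf.2 y)
      · have hyO : f y ∈ O := by
          simp only [hO, Finset.mem_filter, Finset.mem_univ, true_and, hf.1]
          exact h
        have h1 : i y = i (f y) := by
          conv_lhs => rw [← hf.1 y]
          exact hi (f y)
        have h2 : j y = j (f y) := by
          conv_lhs => rw [← hf.1 y]
          exact hj (f y)
        rw [h1, h2]
        exact congrFun hij ⟨f y, hyO⟩
  calc ((Finset.univ.filter fun i : Fin (2*p) → k => ∀ x, i (f x) = i x).card : ℝ)
      ≤ ((n ^ p : ℕ) : ℝ) := by exact_mod_cast hcard
    _ = (n:ℝ) ^ p := by push_cast; ring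

end Key

open Finset in
/-- key estimate in the proof of Lemma 3.7, combinatorial form.
For all integers `n, p ≥ 1` and `q ∈ (−1,1)`,
`∑_{(i₁,…,i_{2p}) ∈ {0,…,n−1}^{2p}}
   (∑_{π ∈ P₂({1,…,2p})} q^{Cr(π)} δ(π,(i₁,…,i_{2p})))² ≤ n^p (4/(1−|q|))^{2p}`. -/
theorem key_estimate_lemma_3_7 (n p : ℕ) (hn : 1 ≤ n) (hp : 1 ≤ p)
    (q : ℝ) (hq₁ : -1 < q) (hq₂ : q < 1) :
    ∑ i : Fin (2 * p) → Fin n,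
        (∑ f ∈ pairings (2 * p), q ^ crossings f * (pairingDelta f i : ℝ)) ^ 2
      ≤ (n : ℝ) ^ p * (4 / (1 - |q|)) ^ (2 * p) := by
  classical
  set t : ℝ := |q| with ht
  have ht0 : 0 ≤ t := abs_nonneg q
  have ht1 : t < 1 := abs_lt.2 ⟨hq₁, hq₂⟩
  have h1t : (0:ℝ) < 1 - t := by linarith
  -- expand square and swap sums
  have hexp : ∑ i : Fin (2 * p) → Fin n,
        (∑ f ∈ pairings (2 * p), q ^ crossings f * (pairingDelta f i : ℝ)) ^ 2
      = ∑ f ∈ pairings (2 * p), ∑ g ∈ pairings (2 * p),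
          (q ^ crossings f * q ^ crossings g) *
            ∑ i : Fin (2 * p) → Fin n, (pairingDelta f i : ℝ) * (pairingDelta g i : ℝ) := by
    have h1 : ∀ i : Fin (2 * p) → Fin n,
        (∑ f ∈ pairings (2 * p), q ^ crossings f * (pairingDelta f i : ℝ)) ^ 2
        = ∑ f ∈ pairings (2 * p), ∑ g ∈ pairings (2 * p),
            (q ^ crossings f * q ^ crossings g) *
              ((pairingDelta f i : ℝ) * (pairingDelta g i : ℝ)) := by
      intro i
      rw [sq, Finset.sum_mul_sum]
      apply Finset.sum_congr rfl; intro f _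
      apply Finset.sum_congr rfl; intro g _
      ring
    rw [Finset.sum_congr rfl fun i _ => h1 i, Finset.sum_comm]
    apply Finset.sum_congr rfl; intro f _
    rw [Finset.sum_comm]
    apply Finset.sum_congr rfl; intro g _
    rw [Finset.mul_sum]
  rw [hexp]
  -- bound each term
  have hterm : ∀ f ∈ pairings (2*p), ∀ g ∈ pairings (2*p),
      (q ^ crossings f * q ^ crossings g) *
          ∑ i : Fin (2 * p) → Fin n, (pairingDelta f i : ℝ) * (pairingDelta g i : ℝ)
        ≤ (t ^ crossings f * t ^ crossings g) * (n:ℝ) ^ p := by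
    intro f hfm g hgm
    have hf : IsPairing f := by simpa [pairings] using hfm
    have hg : IsPairing g := by simpa [pairings] using hgm
    set S := ∑ i : Fin (2 * p) → Fin n, (pairingDelta f i : ℝ) * (pairingDelta g i : ℝ) with hS
    have hS0 : 0 ≤ S := Finset.sum_nonneg fun i _ => by positivity
    have hSle : S ≤ (n:ℝ) ^ p := by
      have : S ≤ ∑ i : Fin (2 * p) → Fin n, (pairingDelta f i : ℝ) := by
        apply Finset.sum_le_sum
        intro i _
        have h1 : (pairingDelta g i : ℝ) ≤ 1 := by
          simp only [pairingDelta]; split <;> norm_num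
        have h0 : (0:ℝ) ≤ (pairingDelta f i : ℝ) := by positivity
        calc (pairingDelta f i : ℝ) * (pairingDelta g i : ℝ)
            ≤ (pairingDelta f i : ℝ) * 1 := mul_le_mul_of_nonneg_left h1 h0
          _ = (pairingDelta f i : ℝ) := mul_one _
      exact this.trans (Key.delta_card_le (Fintype.card_fin n) hf)
    calc (q ^ crossings f * q ^ crossings g) * S
        ≤ |q ^ crossings f * q ^ crossings g| * S :=
          mul_le_mul_of_nonneg_right (le_abs_self _) hS0
      _ = (t ^ crossings f * t ^ crossings g) * S := by
          rw [abs_mul, abs_pow, abs_pow]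
      _ ≤ (t ^ crossings f * t ^ crossings g) * (n:ℝ) ^ p := by
          apply mul_le_mul_of_nonneg_left hSle
          positivity
  calc ∑ f ∈ pairings (2 * p), ∑ g ∈ pairings (2 * p),
        (q ^ crossings f * q ^ crossings g) *
          ∑ i : Fin (2 * p) → Fin n, (pairingDelta f i : ℝ) * (pairingDelta g i : ℝ)
      ≤ ∑ f ∈ pairings (2 * p), ∑ g ∈ pairings (2 * p),
          (t ^ crossings f * t ^ crossings g) * (n:ℝ) ^ p := by
        apply Finset.sum_le_sum; intro f hf
        apply Finset.sum_le_sum; intro g hg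
        exact hterm f hf g hg
    _ = (∑ f ∈ pairings (2 * p), t ^ crossings f) ^ 2 * (n:ℝ) ^ p := by
        rw [sq, Finset.sum_mul_sum, Finset.sum_mul]
        apply Finset.sum_congr rfl; intro f _
        rw [Finset.sum_mul]
    _ ≤ ((2:ℝ) ^ (2*p) * (1/(1-t)) ^ p) ^ 2 * (n:ℝ) ^ p := by
        apply mul_le_mul_of_nonneg_right _ (by positivity)
        have hA0 : 0 ≤ ∑ f ∈ pairings (2 * p), t ^ crossings f :=
          Finset.sum_nonneg fun f _ => pow_nonneg ht0 _
        exact pow_le_pow_left₀ hA0 (Key.sum_pow_crossings_le p hp ht0 ht1) 2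
    _ = (n : ℝ) ^ p * (4 / (1 - t)) ^ (2 * p) := by
        rw [mul_comm]
        congr 1
        rw [mul_pow, ← pow_mul, ← pow_mul, div_pow, one_pow, div_pow]
        rw [show (2:ℝ) ^ (2*p*2) = 4 ^ (2*p) by
              rw [show (4:ℝ) = 2^2 by norm_num, ← pow_mul]; ring_nf,
            show p*2 = 2*p from by ring, mul_one_div]
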